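/- Logarithmic modulus of continuity from borderline Sobolev + maximum principle in 2D: let u ∈ H¹(B) ∩ C(B̄), B the unit disc in ℝ², and suppose osc_{∂B(0,s)} u is nondecreasing in s ∈ (0,1) and max/min over B(0,s) are attained on ∂B(0,s). Then for all r ∈ (0,1), osc_{B(0,r)} u ≤ C (−log r)^{−1/2} ‖∇u‖_{L²(B)} with a universal constant C. -/

import Mathlib

open Metric MeasureTheory

section Stmt13Aux
open Real Set
open scoped ENNReal
noncomputable section
namespace Stmt13
abbrev E2 := EuclideanSpace ℝ (Fin 2)

def ψ : ℝ × ℝ → E2 := fun p =>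
  (MeasurableEquiv.toLp 2 (Fin 2 → ℝ)) (MeasurableEquiv.finTwoArrow.symm p)

lemma ψ_mp : MeasurePreserving ψ volume volume :=
  ((EuclideanSpace.volume_preserving_symm_measurableEquiv_toLp (Fin 2)).symm).comp
    ((volume_preserving_finTwoArrow ℝ).symm)

lemma ψ_apply (p : ℝ × ℝ) (i : Fin 2) : ψ p i = ![p.1, p.2] i := by
  simp [ψ, MeasurableEquiv.finTwoArrow]

lemma ψ_norm (p : ℝ × ℝ) : ‖ψ p‖ = Real.sqrt (p.1^2 + p.2^2) := by
  rw [EuclideanSpace.norm_eq]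
  congr 1
  rw [Fin.sum_univ_two, ψ_apply, ψ_apply]
  simp [sq_abs]

def v0 : E2 := EuclideanSpace.single 0 1
def v1 : E2 := EuclideanSpace.single 1 1

lemma ψ_eq (p : ℝ × ℝ) : ψ p = p.1 • v0 + p.2 • v1 := by
  ext i
  rw [ψ_apply]
  fin_cases i <;> simp [v0, v1, EuclideanSpace.single_apply]
end Stmt13
namespace Stmt13
def γ (s θ : ℝ) : E2 := ψ (s * Real.cos θ, s * Real.sin θ)

lemma γ_norm (s θ : ℝ) : ‖γ s θ‖ = |s| := by
  rw [γ, ψ_norm]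
  rw [show (s * Real.cos θ)^2 + (s * Real.sin θ)^2 = s^2 by
    have := Real.sin_sq_add_cos_sq θ; nlinarith]
  exact Real.sqrt_sq_eq_abs s

lemma γ_mem_sphere {s : ℝ} (hs : 0 < s) (θ : ℝ) : γ s θ ∈ sphere (0 : E2) s := by
  simp [mem_sphere_iff_norm, γ_norm, abs_of_pos hs]

lemma γ_hasDerivAt (s θ : ℝ) :
    HasDerivAt (γ s) (ψ (-(s * Real.sin θ), s * Real.cos θ)) θ := by
  have h : ∀ t, γ s t = (s * Real.cos t) • v0 + (s * Real.sin t) • v1 := fun t => ψ_eq _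
  simp_rw [funext h, ψ_eq]
  exact (((Real.hasDerivAt_cos θ).const_mul s).smul_const v0).add
    (((Real.hasDerivAt_sin θ).const_mul s).smul_const v1) |>.congr_deriv (by
      simp [mul_comm])

lemma γ_surj {s : ℝ} (hs : 0 < s) {x : E2} (hx : x ∈ sphere (0 : E2) s) :
    ∃ θ ∈ Ioc (-π) π, γ s θ = x := by
  have hxψ : x = ψ (x 0, x 1) := by
    ext i; rw [ψ_apply]; fin_cases i <;> rfl
  set z : ℂ := ⟨x 0, x 1⟩ with hz
  have habs : ‖z‖ = s := by
    rw [mem_sphere_iff_norm, sub_zero] at hx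
    rw [Complex.norm_def, Complex.normSq_mk, ← hx, EuclideanSpace.norm_eq]
    congr 1
    rw [Fin.sum_univ_two]
    simp [sq_abs]; ring
  have hz0 : z ≠ 0 := by
    intro h; rw [h] at habs; simp at habs; linarith
  refine ⟨Complex.arg z, Complex.arg_mem_Ioc z, ?_⟩
  rw [hxψ, γ]
  have h1 : s * Real.cos (Complex.arg z) = x 0 := by
    rw [Complex.cos_arg hz0, habs]; field_simp; rfl
  have h2 : s * Real.sin (Complex.arg z) = x 1 := by
    rw [Complex.sin_arg, habs]; field_simp; rfl
  rw [h1, h2]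
end Stmt13
namespace Stmt13

lemma CS {g : ℝ → ℝ} (hg : Continuous g) (hgnn : ∀ θ, 0 ≤ g θ) :
    ∫ θ in (-π)..π, g θ ≤ Real.sqrt (2*π) * Real.sqrt (∫ θ in (-π)..π, (g θ)^2) := by
  have hpi : (-π) ≤ π := by linarith [Real.pi_pos]
  set I1 := ∫ θ in (-π)..π, g θ with hI1
  set I2 := ∫ θ in (-π)..π, (g θ)^2 with hI2
  have hint1 : IntervalIntegrable g volume (-π) π := hg.intervalIntegrable _ _
  have hint2 : IntervalIntegrable (fun θ => (g θ)^2) volume (-π) π :=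
    (hg.pow 2).intervalIntegrable _ _
  set c : ℝ := I1 / (2*π) with hc
  have key : 0 ≤ ∫ θ in (-π)..π, (g θ - c)^2 :=
    intervalIntegral.integral_nonneg hpi (fun _ _ => sq_nonneg _)
  have expand : (∫ θ in (-π)..π, (g θ - c)^2)
      = I2 - 2*c*I1 + c^2 * (2*π) := by
    have : ∀ θ, (g θ - c)^2 = (g θ)^2 - (2*c) * g θ + c^2 := by intro θ; ring
    simp_rw [this]
    rw [intervalIntegral.integral_add (hint2.sub (hint1.const_mul (2*c)))
      (intervalIntegrable_const), intervalIntegral.integral_sub hint2 (hint1.const_mul (2*c)),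
      intervalIntegral.integral_const_mul, intervalIntegral.integral_const]
    simp only [smul_eq_mul]
    ring
  have hsq : I1^2 ≤ 2*π * I2 := by
    rw [expand] at key
    have h2pi : (0:ℝ) < 2*π := by linarith [Real.pi_pos]
    have hmul : (2*π) * (I2 - 2*c*I1 + c^2*(2*π)) = 2*π*I2 - I1^2 := by
      rw [hc]; field_simp; ring
    nlinarith [mul_nonneg h2pi.le key]
  have hI1nn : 0 ≤ I1 := intervalIntegral.integral_nonneg hpi (fun θ _ => hgnn θ)
  calc I1 = Real.sqrt (I1^2) := (Real.sqrt_sq hI1nn).symm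
    _ ≤ Real.sqrt (2*π*I2) := Real.sqrt_le_sqrt hsq
    _ = Real.sqrt (2*π) * Real.sqrt I2 := by
        rw [Real.sqrt_mul (by linarith [Real.pi_pos])]

end Stmt13
namespace Stmt13

lemma circle_osc {u : E2 → ℝ} (hu : ContDiffOn ℝ 1 u (ball (0:E2) 1))
    {s : ℝ} (hs : 0 < s) (hs1 : s < 1) :
    sSup (u '' sphere (0:E2) s) - sInf (u '' sphere (0:E2) s)
      ≤ ∫ θ in (-π)..π, s * ‖fderiv ℝ u (γ s θ)‖ := by
  have hpi : (-π) ≤ π := by linarith [Real.pi_pos]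
  have hsub : sphere (0:E2) s ⊆ ball (0:E2) 1 :=
    (sphere_subset_closedBall).trans (closedBall_subset_ball hs1)
  have hγball : ∀ θ, γ s θ ∈ ball (0:E2) 1 := fun θ => hsub (γ_mem_sphere hs θ)
  have hcont : ContinuousOn u (sphere (0:E2) s) := hu.continuousOn.mono hsub
  have hne : (sphere (0:E2) s).Nonempty := NormedSpace.sphere_nonempty.2 hs.le
  obtain ⟨x1, hx1, hmax⟩ := (isCompact_sphere (0:E2) s).exists_sSup_image_eq hne hcont
  obtain ⟨x2, hx2, hmin⟩ := (isCompact_sphere (0:E2) s).exists_sInf_image_eq hne hcont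
  obtain ⟨θ1, hθ1, hγ1⟩ := γ_surj hs hx1
  obtain ⟨θ2, hθ2, hγ2⟩ := γ_surj hs hx2
  -- derivative of u along the circle
  set d : ℝ → ℝ := fun θ => fderiv ℝ u (γ s θ) (ψ (-(s * Real.sin θ), s * Real.cos θ)) with hd
  have hderiv : ∀ θ, HasDerivAt (fun t => u (γ s t)) (d θ) θ := by
    intro θ
    have hdiff : DifferentiableAt ℝ u (γ s θ) :=
      (hu.differentiableOn one_ne_zero).differentiableAt (isOpen_ball.mem_nhds (hγball θ))
    exact hdiff.hasFDerivAt.comp_hasDerivAt θ (γ_hasDerivAt s θ)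
  have hγcont : Continuous (γ s) := by
    rw [continuous_iff_continuousAt]
    exact fun θ => (γ_hasDerivAt s θ).continuousAt
  have hfcont : ContinuousOn (fderiv ℝ u) (ball (0:E2) 1) :=
    hu.continuousOn_fderiv_of_isOpen isOpen_ball le_rfl
  have hdcont : Continuous d := by
    rw [continuous_iff_continuousAt]
    intro θ
    have h1 : ContinuousAt (fun t => fderiv ℝ u (γ s t)) θ :=
      (hfcont.continuousAt (isOpen_ball.mem_nhds (hγball θ))).comp hγcont.continuousAt
    have h2 : Continuous (fun t : ℝ => ψ (-(s * Real.sin t), s * Real.cos t)) := by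
      simp_rw [ψ_eq]
      continuity
    exact ContinuousAt.comp (isBoundedBilinearMap_apply.continuous.continuousAt)
      (h1.prodMk h2.continuousAt)
  set g : ℝ → ℝ := fun θ => s * ‖fderiv ℝ u (γ s θ)‖ with hgdef
  have hgcont : Continuous g := by
    rw [continuous_iff_continuousAt]
    intro θ
    exact continuousAt_const.mul (((hfcont.continuousAt
      (isOpen_ball.mem_nhds (hγball θ))).comp hγcont.continuousAt).norm)
  have hdg : ∀ θ, |d θ| ≤ g θ := by
    intro θ
    calc |d θ| ≤ ‖fderiv ℝ u (γ s θ)‖ * ‖ψ (-(s * Real.sin θ), s * Real.cos θ)‖ :=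
          (fderiv ℝ u (γ s θ)).le_opNorm _
      _ = g θ := by
          rw [ψ_norm]
          rw [show (-(s * Real.sin θ))^2 + (s * Real.cos θ)^2 = s^2 by
            have := Real.sin_sq_add_cos_sq θ; nlinarith]
          rw [Real.sqrt_sq_eq_abs, abs_of_pos hs]
          ring
  have key : ∀ a b : ℝ, a ∈ Ioc (-π) π → b ∈ Ioc (-π) π →
      u (γ s b) - u (γ s a) ≤ ∫ θ in (-π)..π, g θ := by
    intro a b ha hb
    have hgint : IntervalIntegrable g volume (-π) π := hgcont.intervalIntegrable _ _
    have hmono : ∀ c e : ℝ, -π ≤ c → c ≤ e → e ≤ π →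
        (∫ θ in c..e, g θ) ≤ ∫ θ in (-π)..π, g θ := by
      intro c e h1 h2 h3
      apply intervalIntegral.integral_mono_interval h1 h2 h3
      · filter_upwards with θ
        exact mul_nonneg hs.le (norm_nonneg _)
      · exact hgcont.intervalIntegrable _ _
    rcases le_total a b with hab | hab
    · have hftc : u (γ s b) - u (γ s a) = ∫ θ in a..b, d θ :=
        (intervalIntegral.integral_eq_sub_of_hasDerivAt (fun θ _ => hderiv θ)
          (hdcont.intervalIntegrable _ _)).symm
      rw [hftc]
      calc (∫ θ in a..b, d θ) ≤ ∫ θ in a..b, g θ := by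
            apply intervalIntegral.integral_mono_on hab (hdcont.intervalIntegrable _ _)
              (hgcont.intervalIntegrable _ _)
            intro θ _
            exact (le_abs_self _).trans (hdg θ)
        _ ≤ ∫ θ in (-π)..π, g θ := hmono a b (le_of_lt ha.1) hab hb.2
    · have hftc : u (γ s a) - u (γ s b) = ∫ θ in b..a, d θ :=
        (intervalIntegral.integral_eq_sub_of_hasDerivAt (fun θ _ => hderiv θ)
          (hdcont.intervalIntegrable _ _)).symm
      have : u (γ s b) - u (γ s a) = ∫ θ in b..a, (-d) θ := by
        have h3 : (∫ θ in b..a, (-d) θ) = -∫ θ in b..a, d θ := by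
          simp [intervalIntegral.integral_neg]
        rw [h3, ← hftc]; ring
      rw [this]
      calc (∫ θ in b..a, (-d) θ) ≤ ∫ θ in b..a, g θ := by
            apply intervalIntegral.integral_mono_on hab
              ((hdcont.neg).intervalIntegrable _ _) (hgcont.intervalIntegrable _ _)
            intro θ _
            exact (neg_le_abs _).trans (hdg θ)
        _ ≤ ∫ θ in (-π)..π, g θ := hmono b a (le_of_lt hb.1) hab ha.2
  rw [hmax, hmin, ← hγ1, ← hγ2]
  exact key θ2 θ1 hθ2 hθ1

end Stmt13
namespace Stmt13

def H (u : E2 → ℝ) (s : ℝ) : ℝ := ∫ θ in (-π)..π, s * ‖fderiv ℝ u (γ s θ)‖^2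

lemma circle_osc_sq {u : E2 → ℝ} (hu : ContDiffOn ℝ 1 u (ball (0:E2) 1))
    {s : ℝ} (hs : 0 < s) (hs1 : s < 1) :
    (sSup (u '' sphere (0:E2) s) - sInf (u '' sphere (0:E2) s))^2 / (2*π*s)
      ≤ H u s := by
  have hpi : (0:ℝ) < π := Real.pi_pos
  have hsub : sphere (0:E2) s ⊆ ball (0:E2) 1 :=
    (sphere_subset_closedBall).trans (closedBall_subset_ball hs1)
  have hγball : ∀ θ, γ s θ ∈ ball (0:E2) 1 := fun θ => hsub (γ_mem_sphere hs θ)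
  have hfcont : ContinuousOn (fderiv ℝ u) (ball (0:E2) 1) :=
    hu.continuousOn_fderiv_of_isOpen isOpen_ball le_rfl
  have hγcont : Continuous (γ s) := by
    rw [continuous_iff_continuousAt]
    exact fun θ => (γ_hasDerivAt s θ).continuousAt
  have hgcont : Continuous (fun θ => s * ‖fderiv ℝ u (γ s θ)‖) := by
    rw [continuous_iff_continuousAt]
    intro θ
    exact continuousAt_const.mul (((hfcont.continuousAt
      (isOpen_ball.mem_nhds (hγball θ))).comp hγcont.continuousAt).norm)
  set O := sSup (u '' sphere (0:E2) s) - sInf (u '' sphere (0:E2) s) with hO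
  have h1 : O ≤ ∫ θ in (-π)..π, s * ‖fderiv ℝ u (γ s θ)‖ := circle_osc hu hs hs1
  have h2 := CS hgcont (fun θ => mul_nonneg hs.le (norm_nonneg _))
  have hsqint : (∫ θ in (-π)..π, (s * ‖fderiv ℝ u (γ s θ)‖)^2) = s * H u s := by
    rw [H, ← intervalIntegral.integral_const_mul]
    congr 1
    funext θ
    ring
  have hOnn : 0 ≤ O := by
    have hne : (sphere (0:E2) s).Nonempty := NormedSpace.sphere_nonempty.2 hs.le
    have hcomp : IsCompact (u '' sphere (0:E2) s) :=
      (isCompact_sphere (0:E2) s).image_of_continuousOn (hu.continuousOn.mono hsub)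
    have := csInf_le_csSup (hne.image u) hcomp.bddBelow hcomp.bddAbove
    linarith
  have hHnn : 0 ≤ H u s := by
    have hpos : 0 ≤ ∫ θ in (-π)..π, (s * ‖fderiv ℝ u (γ s θ)‖)^2 :=
      intervalIntegral.integral_nonneg (by linarith) (fun _ _ => sq_nonneg _)
    rw [hsqint] at hpos
    nlinarith
  have hO2 : O^2 ≤ 2*π*(s * H u s) := by
    have h3 : O ≤ Real.sqrt (2*π) * Real.sqrt (s * H u s) := by
      rw [← hsqint]; exact h1.trans h2
    have h4 : (Real.sqrt (2*π) * Real.sqrt (s * H u s))^2 = 2*π*(s*H u s) := by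
      rw [mul_pow, Real.sq_sqrt (by linarith), Real.sq_sqrt (by positivity)]
    nlinarith [pow_le_pow_left₀ hOnn h3 2]
  rw [div_le_iff₀ (by positivity)]
  nlinarith [hO2]

end Stmt13
namespace Stmt13

lemma ψ_measurable : Measurable ψ := ψ_mp.measurable

lemma key_integral {u : E2 → ℝ} (hu : ContDiffOn ℝ 1 u (ball (0:E2) 1))
    (hi : IntegrableOn (fun x => ‖fderiv ℝ u x‖^2) (ball (0:E2) 1))
    {r c : ℝ} (hc : 0 ≤ c) (hr0 : 0 < r) (hr1 : r < 1)
    (hlow : ∀ s, r < s → s < 1 → c / s ≤ H u s) :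
    c * (-Real.log r) ≤ ∫ x in ball (0:E2) 1, ‖fderiv ℝ u x‖^2 := by
  have hpi : (0:ℝ) < π := Real.pi_pos
  set I := ∫ x in ball (0:E2) 1, ‖fderiv ℝ u x‖^2 with hI
  have hI0 : 0 ≤ I := setIntegral_nonneg measurableSet_ball (fun x _ => by positivity)
  set G : E2 → ℝ≥0∞ := fun x => ENNReal.ofReal (‖fderiv ℝ u x‖^2) with hG
  have hGmeas : Measurable G :=
    ((measurable_fderiv ℝ u).norm.pow_const 2).ennreal_ofReal
  set J := ∫⁻ x in ball (0:E2) 1, G x with hJ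
  have hJI : J = ENNReal.ofReal I := by
    rw [hJ, hI, ← ofReal_integral_eq_lintegral_ofReal hi
      (Filter.Eventually.of_forall (fun x => by positivity))]
  -- transfer to ℝ × ℝ
  have hmap : volume.restrict (ball (0:E2) 1)
      = Measure.map ψ (volume.restrict (ψ ⁻¹' ball (0:E2) 1)) := by
    rw [← Measure.restrict_map ψ_measurable measurableSet_ball, ψ_mp.map_eq]
  have hJ2 : J = ∫⁻ p in ψ ⁻¹' ball (0:E2) 1, G (ψ p) := by
    rw [hJ, hmap, lintegral_map hGmeas ψ_measurable]
  -- change of variables for polar coordinates on S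
  set S : Set (ℝ × ℝ) := Ioo r 1 ×ˢ Ioo (-π) π with hS
  have hSmeas : MeasurableSet S := measurableSet_Ioo.prod measurableSet_Ioo
  set B : ℝ × ℝ → ℝ × ℝ →L[ℝ] ℝ × ℝ := fun p =>
    LinearMap.toContinuousLinearMap (Matrix.toLin (Module.Basis.finTwoProd ℝ) (Module.Basis.finTwoProd ℝ)
      !![Real.cos p.2, -p.1 * Real.sin p.2; Real.sin p.2, p.1 * Real.cos p.2]) with hB
  have hBderiv : ∀ p ∈ S, HasFDerivWithinAt polarCoord.symm (B p) S p :=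
    fun p _ => (hasFDerivAt_polarCoord_symm p).hasFDerivWithinAt
  have hB_det : ∀ p, (B p).det = p.1 := by
    intro p
    conv_rhs => rw [← one_mul p.1, ← Real.cos_sq_add_sin_sq p.2]
    simp only [hB, neg_mul, LinearMap.det_toContinuousLinearMap, LinearMap.det_toLin,
      Matrix.det_fin_two_of, sub_neg_eq_add]
    ring
  have hStarget : S ⊆ polarCoord.target := by
    rintro ⟨a, b⟩ ⟨ha, hb⟩
    exact ⟨lt_trans hr0 ha.1, hb⟩
  have hinj : Set.InjOn polarCoord.symm S :=
    polarCoord.symm.injOn.mono hStarget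
  have hcov := lintegral_image_eq_lintegral_abs_det_fderiv_mul volume hSmeas hBderiv hinj
    (fun x => G (ψ x))
  -- identify integrand
  have hγψ : ∀ p : ℝ × ℝ, γ p.1 p.2 = ψ (polarCoord.symm p) := by
    intro p
    rw [γ, polarCoord_symm_apply]
  set L := ∫⁻ p in S, ENNReal.ofReal (p.1 * ‖fderiv ℝ u (γ p.1 p.2)‖^2) with hL
  have hLcov : L = ∫⁻ x in polarCoord.symm '' S, G (ψ x) := by
    rw [hcov, hL]
    apply setLIntegral_congr_fun hSmeas
    intro p hp
    dsimp only
    rw [hγψ, hG, hB_det, abs_of_pos (lt_trans hr0 hp.1.1),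
      ENNReal.ofReal_mul (le_of_lt (lt_trans hr0 hp.1.1))]
  have himg : polarCoord.symm '' S ⊆ ψ ⁻¹' ball (0:E2) 1 := by
    rintro x ⟨p, hp, rfl⟩
    simp only [Set.mem_preimage, mem_ball, dist_zero_right]
    rw [polarCoord_symm_apply, ψ_norm]
    rw [show (p.1 * Real.cos p.2)^2 + (p.1 * Real.sin p.2)^2 = p.1^2 by
      have := Real.sin_sq_add_cos_sq p.2; nlinarith]
    rw [Real.sqrt_sq_eq_abs, abs_of_pos (lt_trans hr0 hp.1.1)]
    exact hp.1.2
  have hLJ : L ≤ J := by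
    rw [hLcov, hJ2]
    exact lintegral_mono_set himg
  -- Tonelli
  set k : ℝ × ℝ → ℝ≥0∞ := fun p => ENNReal.ofReal (p.1 * ‖fderiv ℝ u (γ p.1 p.2)‖^2) with hk
  have hkmeas : Measurable k := by
    apply Measurable.ennreal_ofReal
    apply Measurable.mul measurable_fst
    apply Measurable.pow_const
    apply Measurable.norm
    apply (measurable_fderiv ℝ u).comp
    have : (fun p : ℝ × ℝ => γ p.1 p.2) = ψ ∘ polarCoord.symm := by
      funext p; exact hγψ p
    rw [this]
    apply ψ_measurable.comp
    have h2 : (polarCoord.symm : ℝ × ℝ → ℝ × ℝ)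
        = fun p => (p.1 * Real.cos p.2, p.1 * Real.sin p.2) := by
      funext p; rw [polarCoord_symm_apply]
    rw [h2]
    exact (measurable_fst.mul (Real.measurable_cos.comp measurable_snd)).prodMk
      (measurable_fst.mul (Real.measurable_sin.comp measurable_snd))
  have hLT : L = ∫⁻ s in Ioo r 1, ∫⁻ θ in Ioo (-π) π, k (s, θ) := by
    rw [hL, hS, Measure.volume_eq_prod, ← Measure.prod_restrict]
    exact lintegral_prod k hkmeas.aemeasurable
  -- lower bound for inner integral
  have hinner : ∀ s ∈ Ioo r 1, ENNReal.ofReal (c / s)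
      ≤ ∫⁻ θ in Ioo (-π) π, k (s, θ) := by
    intro s hs
    have hs0 : 0 < s := lt_trans hr0 hs.1
    -- continuity of the integrand in θ
    have hsub : sphere (0:E2) s ⊆ ball (0:E2) 1 :=
      (sphere_subset_closedBall).trans (closedBall_subset_ball hs.2)
    have hγball : ∀ θ, γ s θ ∈ ball (0:E2) 1 := fun θ => hsub (γ_mem_sphere hs0 θ)
    have hfcont : ContinuousOn (fderiv ℝ u) (ball (0:E2) 1) :=
      hu.continuousOn_fderiv_of_isOpen isOpen_ball le_rfl
    have hγcont : Continuous (γ s) := by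
      rw [continuous_iff_continuousAt]
      exact fun θ => (γ_hasDerivAt s θ).continuousAt
    have hgcont : Continuous (fun θ => s * ‖fderiv ℝ u (γ s θ)‖^2) := by
      rw [continuous_iff_continuousAt]
      intro θ
      exact continuousAt_const.mul ((((hfcont.continuousAt
        (isOpen_ball.mem_nhds (hγball θ))).comp hγcont.continuousAt).norm).pow 2)
    have hint : IntegrableOn (fun θ => s * ‖fderiv ℝ u (γ s θ)‖^2) (Ioo (-π) π) :=
      (hgcont.continuousOn.integrableOn_Icc).mono_set Ioo_subset_Icc_self
    have heq : (∫⁻ θ in Ioo (-π) π, k (s, θ))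
        = ENNReal.ofReal (∫ θ in Ioo (-π) π, s * ‖fderiv ℝ u (γ s θ)‖^2) := by
      rw [← ofReal_integral_eq_lintegral_ofReal hint
        (Filter.Eventually.of_forall (fun θ => by positivity))]
    rw [heq]
    apply ENNReal.ofReal_le_ofReal
    have hH : (∫ θ in Ioo (-π) π, s * ‖fderiv ℝ u (γ s θ)‖^2) = H u s := by
      rw [H, intervalIntegral.integral_of_le (by linarith), integral_Ioc_eq_integral_Ioo]
    rw [hH]
    exact hlow s hs.1 hs.2
  -- lower bound integral of c / s
  have hlog : (∫⁻ s in Ioo r 1, ENNReal.ofReal (c / s)) = ENNReal.ofReal (c * (-Real.log r)) := by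
    have hcont : ContinuousOn (fun s : ℝ => c / s) (Icc r 1) := by
      intro s hs
      exact (continuousAt_const.div continuousAt_id
        (ne_of_gt (lt_of_lt_of_le hr0 hs.1))).continuousWithinAt
    have hint : IntegrableOn (fun s : ℝ => c / s) (Ioo r 1) :=
      (hcont.integrableOn_Icc).mono_set Ioo_subset_Icc_self
    rw [← ofReal_integral_eq_lintegral_ofReal hint ((ae_restrict_iff' measurableSet_Ioo).2
      (Filter.Eventually.of_forall (fun s hs =>
        div_nonneg hc (le_of_lt (lt_trans hr0 hs.1)))))]
    congr 1
    rw [← integral_Ioc_eq_integral_Ioo, ← intervalIntegral.integral_of_le (by linarith)]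
    have : (fun x : ℝ => c / x) = fun x : ℝ => c * x⁻¹ := by funext x; rw [div_eq_mul_inv]
    rw [this, intervalIntegral.integral_const_mul, integral_inv (by
      intro h
      rcases Set.mem_uIcc.mp h with h1 | h1 <;> linarith [h1.1, h1.2])]
    rw [Real.log_div one_ne_zero (ne_of_gt hr0), Real.log_one]
    ring
  have hmono2 : (∫⁻ s in Ioo r 1, ENNReal.ofReal (c / s))
      ≤ ∫⁻ s in Ioo r 1, ∫⁻ θ in Ioo (-π) π, k (s, θ) := by
    apply setLIntegral_mono
      (Measurable.lintegral_prod_right (f := fun s θ => k (s, θ)) hkmeas)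
    exact fun s hs => hinner s hs
  have hfinal : ENNReal.ofReal (c * (-Real.log r)) ≤ ENNReal.ofReal I := by
    rw [← hlog, ← hJI]
    exact le_trans (le_trans hmono2 (le_of_eq hLT.symm)) hLJ
  exact (ENNReal.ofReal_le_ofReal_iff hI0).mp hfinal

end Stmt13
namespace Stmt13

lemma bdd_facts {u : E2 → ℝ} (hu : ContDiffOn ℝ 1 u (ball (0:E2) 1)) {t : ℝ}
    (ht0 : 0 < t) (ht1 : t < 1) :
    (u '' ball (0:E2) t).Nonempty ∧ BddAbove (u '' ball (0:E2) t)
      ∧ BddBelow (u '' ball (0:E2) t) := by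
  have hne : (ball (0:E2) t).Nonempty := ⟨0, by simp [ht0]⟩
  have hsub : closedBall (0:E2) t ⊆ ball (0:E2) 1 := closedBall_subset_ball ht1
  have hcomp : IsCompact (u '' closedBall (0:E2) t) :=
    (isCompact_closedBall _ _).image_of_continuousOn (hu.continuousOn.mono hsub)
  have himg : u '' ball (0:E2) t ⊆ u '' closedBall (0:E2) t :=
    Set.image_mono ball_subset_closedBall
  exact ⟨hne.image u, hcomp.bddAbove.mono himg, hcomp.bddBelow.mono himg⟩

theorem main :
    ∃ C > 0, ∀ u : EuclideanSpace ℝ (Fin 2) → ℝ,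
      ContDiffOn ℝ 1 u (ball (0 : EuclideanSpace ℝ (Fin 2)) 1) →
      IntegrableOn (fun x => ‖fderiv ℝ u x‖ ^ 2) (ball (0 : EuclideanSpace ℝ (Fin 2)) 1) →
      (∀ s ∈ Set.Ioo (0:ℝ) 1,
        sSup (u '' ball (0 : EuclideanSpace ℝ (Fin 2)) s) =
          sSup (u '' sphere (0 : EuclideanSpace ℝ (Fin 2)) s) ∧
        sInf (u '' ball (0 : EuclideanSpace ℝ (Fin 2)) s) =
          sInf (u '' sphere (0 : EuclideanSpace ℝ (Fin 2)) s)) →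
      ∀ r ∈ Set.Ioo (0:ℝ) 1,
        sSup (u '' ball (0 : EuclideanSpace ℝ (Fin 2)) r) -
          sInf (u '' ball (0 : EuclideanSpace ℝ (Fin 2)) r) ≤
        C * (-Real.log r) ^ (-(1/2 : ℝ)) *
          (∫ x in ball (0 : EuclideanSpace ℝ (Fin 2)) 1, ‖fderiv ℝ u x‖ ^ 2) ^ (1/2 : ℝ) := by
  have hpi : (0:ℝ) < π := Real.pi_pos
  refine ⟨Real.sqrt (2*π), Real.sqrt_pos.2 (by linarith), ?_⟩
  intro u hu hi hyp r hr
  obtain ⟨hr0, hr1⟩ := hr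
  set I := ∫ x in ball (0:E2) 1, ‖fderiv ℝ u x‖^2 with hI
  have hI0 : 0 ≤ I := setIntegral_nonneg measurableSet_ball (fun x _ => by positivity)
  set O := sSup (u '' ball (0:E2) r) - sInf (u '' ball (0:E2) r) with hO
  obtain ⟨hne_r, hba_r, hbb_r⟩ := bdd_facts hu hr0 hr1
  have hOnn : 0 ≤ O := by
    have := csInf_le_csSup hne_r hbb_r hba_r
    simp only [hO]; linarith
  have hOs : ∀ s, r < s → s < 1 →
      O ≤ sSup (u '' sphere (0:E2) s) - sInf (u '' sphere (0:E2) s) := by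
    intro s hrs hs1
    have hs0 : 0 < s := lt_trans hr0 hrs
    obtain ⟨hne_s, hba_s, hbb_s⟩ := bdd_facts hu hs0 hs1
    have hsub : u '' ball (0:E2) r ⊆ u '' ball (0:E2) s :=
      Set.image_mono (ball_subset_ball hrs.le)
    have h1 : sSup (u '' ball (0:E2) r) ≤ sSup (u '' ball (0:E2) s) :=
      csSup_le_csSup hba_s hne_r hsub
    have h2 : sInf (u '' ball (0:E2) s) ≤ sInf (u '' ball (0:E2) r) :=
      csInf_le_csInf hbb_s hne_r hsub
    obtain ⟨hsup_eq, hinf_eq⟩ := hyp s ⟨hs0, hs1⟩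
    simp only [hO]
    linarith [h1, h2, hsup_eq, hinf_eq]
  -- apply key integral bound
  set c := O^2 / (2*π) with hc
  have hlow : ∀ s, r < s → s < 1 → c / s ≤ H u s := by
    intro s hrs hs1
    have hs0 : 0 < s := lt_trans hr0 hrs
    have h1 := circle_osc_sq hu hs0 hs1
    have h2 := hOs s hrs hs1
    have h3 : O^2 ≤ (sSup (u '' sphere (0:E2) s) - sInf (u '' sphere (0:E2) s))^2 :=
      pow_le_pow_left₀ hOnn h2 2
    have h4 : c / s = O^2 / (2*π*s) := by rw [hc]; field_simp
    rw [h4]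
    calc O^2 / (2*π*s) ≤ (sSup (u '' sphere (0:E2) s) - sInf (u '' sphere (0:E2) s))^2 / (2*π*s) :=
          by gcongr <;> positivity
      _ ≤ H u s := h1
  have hkey := key_integral hu hi (by positivity : (0:ℝ) ≤ c) hr0 hr1 hlow
  -- conclude
  set a := -Real.log r with ha
  have ha0 : 0 < a := by
    rw [ha]
    have := Real.log_neg hr0 hr1
    linarith
  have hO2 : O^2 * a ≤ 2*π*I := by
    have : c * a ≤ I := hkey
    rw [hc] at this
    have h2pi : (0:ℝ) < 2*π := by linarith
    calc O^2 * a = (O^2/(2*π)) * a * (2*π) := by field_simp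
      _ ≤ I * (2*π) := by
          apply mul_le_mul_of_nonneg_right this h2pi.le
      _ = 2*π*I := by ring
  have hfin : O ≤ Real.sqrt (2*π) * (Real.sqrt a)⁻¹ * Real.sqrt I := by
    have hO2' : O^2 ≤ 2*π*I/a := by
      rw [le_div_iff₀ ha0]; linarith
    calc O = Real.sqrt (O^2) := (Real.sqrt_sq hOnn).symm
      _ ≤ Real.sqrt (2*π*I/a) := Real.sqrt_le_sqrt hO2'
      _ = Real.sqrt (2*π) * (Real.sqrt a)⁻¹ * Real.sqrt I := by
          rw [Real.sqrt_div (by positivity : (0:ℝ) ≤ 2*π*I), Real.sqrt_mul (by positivity)]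
          rw [div_eq_mul_inv]
          ring
  have hrw1 : a ^ (-(1/2 : ℝ)) = (Real.sqrt a)⁻¹ := by
    rw [Real.rpow_neg ha0.le, ← Real.sqrt_eq_rpow]
  have hrw2 : I ^ ((1/2 : ℝ)) = Real.sqrt I := (Real.sqrt_eq_rpow I).symm
  rw [hrw1, hrw2]
  exact hfin

end Stmt13

end
end Stmt13Aux

theorem stmt_13 :
    ∃ C > 0, ∀ u : EuclideanSpace ℝ (Fin 2) → ℝ,
      ContDiffOn ℝ 1 u (ball (0 : EuclideanSpace ℝ (Fin 2)) 1) →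
      IntegrableOn (fun x => ‖fderiv ℝ u x‖ ^ 2) (ball (0 : EuclideanSpace ℝ (Fin 2)) 1) →
      (∀ s ∈ Set.Ioo (0:ℝ) 1,
        sSup (u '' ball (0 : EuclideanSpace ℝ (Fin 2)) s) =
          sSup (u '' sphere (0 : EuclideanSpace ℝ (Fin 2)) s) ∧
        sInf (u '' ball (0 : EuclideanSpace ℝ (Fin 2)) s) =
          sInf (u '' sphere (0 : EuclideanSpace ℝ (Fin 2)) s)) →
      ∀ r ∈ Set.Ioo (0:ℝ) 1,
        sSup (u '' ball (0 : EuclideanSpace ℝ (Fin 2)) r) -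
          sInf (u '' ball (0 : EuclideanSpace ℝ (Fin 2)) r) ≤
        C * (-Real.log r) ^ (-(1/2 : ℝ)) *
          (∫ x in ball (0 : EuclideanSpace ℝ (Fin 2)) 1, ‖fderiv ℝ u x‖ ^ 2) ^ (1/2 : ℝ) := by
  exact Stmt13.main
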